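/- Let A₁, …, A_N be Metzler matrices. If there exists λ ∈ ℝ^n with all entries strictly positive such that λᵀA_i < 0 componentwise for every i, then for any switching signal σ : ℝ≥0 → {1, …, N} that is piecewise constant, every solution x of ẋ = A_{σ(t)} x with x(0) ∈ ℝ^n_{≥0} satisfies that V(x(t)) = λᵀx(t) is strictly decreasing whenever x(t) ≠ 0. -/

import Mathlib

open Matrix Filter Set

/-- A common linear copositive Lyapunov function strictly decreases along trajectories of a
positive switched system, for any piecewise constant switching signal. -/
theorem switched_common_copositive_lyapunov (n N : ℕ)
    (A : Fin N → Matrix (Fin n) (Fin n) ℝ)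
    (hA : ∀ k i j, i ≠ j → 0 ≤ A k i j)
    (l : Fin n → ℝ) (hl : ∀ i, 0 < l i)
    (hlyap : ∀ k j, Matrix.vecMul l (A k) j < 0)
    (σ : ℝ → Fin N)
    (hσ : ∀ t : ℝ, ∃ ε > 0, ∀ s ∈ Set.Ico t (t + ε), σ s = σ t)
    (x : ℝ → Fin n → ℝ)
    (hx : ∀ t : ℝ, HasDerivAt x (Matrix.mulVec (A (σ t)) (x t)) t)
    (hx0 : ∀ i, 0 ≤ x 0 i) :
    ∀ t : ℝ, 0 ≤ t → x t ≠ 0 → deriv (fun s => ∑ i, l i * x s i) t < 0 := by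
  -- componentwise derivatives
  have hxd : ∀ s i, HasDerivAt (fun u => x u i) (Matrix.mulVec (A (σ s)) (x s) i) s :=
    fun s i => hasDerivAt_pi.mp (hx s) i
  have hxc : ∀ i, Continuous fun u => x u i := by
    intro i
    exact continuous_iff_continuousAt.2 fun u => (hxd u i).continuousAt
  -- a uniform bound on matrix entries
  set K : ℝ := ∑ k, ∑ i, ∑ j, |A k i j| with hKdef
  have hK0 : 0 ≤ K := by positivity
  have hKb : ∀ k i j, |A k i j| ≤ K := by
    intro k i j
    calc |A k i j| ≤ ∑ j, |A k i j| :=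
          Finset.single_le_sum (f := fun j => |A k i j|) (fun x _ => abs_nonneg _)
            (Finset.mem_univ j)
      _ ≤ ∑ i, ∑ j, |A k i j| :=
          Finset.single_le_sum (f := fun i => ∑ j, |A k i j|)
            (fun x _ => Finset.sum_nonneg fun _ _ => abs_nonneg _)
            (Finset.mem_univ i)
      _ ≤ ∑ k, ∑ i, ∑ j, |A k i j| :=
          Finset.single_le_sum (f := fun k => ∑ i, ∑ j, |A k i j|)
            (fun x _ => Finset.sum_nonneg fun _ _ => Finset.sum_nonneg fun _ _ => abs_nonneg _)
            (Finset.mem_univ k)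
      _ = K := hKdef.symm
  -- negative-part functions
  set g : Fin n → ℝ → ℝ := fun i s => max (-(x s i)) 0 with hgdef
  have hg0 : ∀ i s, 0 ≤ g i s := fun i s => le_max_right _ _
  set f : ℝ → ℝ := fun s => ∑ i, g i s with hfdef
  have hf0 : ∀ s, 0 ≤ f s := fun s => Finset.sum_nonneg fun i _ => hg0 i s
  have hgle : ∀ i s, g i s ≤ f s := fun i s =>
    Finset.single_le_sum (fun j _ => hg0 j s) (Finset.mem_univ i)
  have hfc : Continuous f :=
    continuous_finset_sum _ fun i _ => ((hxc i).neg.max continuous_const)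
  have hfzero : f 0 = 0 := by
    apply Finset.sum_eq_zero
    intro i _
    simp only [g]
    exact max_eq_right (neg_nonpos.2 (hx0 i))
  set C : ℝ := n * K with hCdef
  have hC0 : 0 ≤ C := by positivity
  -- the key Dini derivative estimate
  have main : ∀ s : ℝ, ∀ r : ℝ, C * f s < r →
      ∀ᶠ z in nhdsWithin s (Set.Ioi s), (z - s)⁻¹ * (f z - f s) < r := by
    intro s r hr
    set ε : ℝ := (r - C * f s) / (n + 1) with hεdef
    have hε : 0 < ε := by
      apply div_pos (by linarith) (by positivity)
    set B : ℝ := K * f s + ε with hBdef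
    have hB0 : 0 < B := by
      have : 0 ≤ K * f s := mul_nonneg hK0 (hf0 s)
      linarith
    have Ei : ∀ i, ∀ᶠ z in nhdsWithin s (Set.Ioi s), (z - s)⁻¹ * (g i z - g i s) < B := by
      intro i
      by_cases hi : 0 < x s i
      · have hev : ∀ᶠ z in nhds s, 0 < x z i :=
          ((hxc i).continuousAt (x := s)).eventually (eventually_gt_nhds hi)
        filter_upwards [nhdsWithin_le_nhds hev] with z hz
        have h1 : g i z = 0 := max_eq_right (neg_nonpos.2 hz.le)
        have h2 : g i s = 0 := max_eq_right (neg_nonpos.2 hi.le)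
        rw [h1, h2]
        simpa using hB0
      · push_neg at hi
        have hgis : g i s = -(x s i) := max_eq_left (neg_nonneg.2 hi)
        -- bound on the negative of the derivative
        have hD : -(Matrix.mulVec (A (σ s)) (x s) i) ≤ K * f s := by
          have hterm : ∀ j, A (σ s) i j * (-(x s j)) ≤ K * g j s := by
            intro j
            by_cases hj : j = i
            · subst hj
              rw [show -(x s j) = g j s from hgis.symm]
              exact mul_le_mul_of_nonneg_right ((le_abs_self _).trans (hKb _ _ _)) (hg0 j s)
            · have hAij : 0 ≤ A (σ s) i j := hA _ _ _ (Ne.symm hj)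
              calc A (σ s) i j * (-(x s j)) ≤ A (σ s) i j * g j s :=
                    mul_le_mul_of_nonneg_left (le_max_left _ _) hAij
                _ ≤ K * g j s :=
                    mul_le_mul_of_nonneg_right ((le_abs_self _).trans (hKb _ _ _)) (hg0 j s)
          calc -(Matrix.mulVec (A (σ s)) (x s) i) = ∑ j, A (σ s) i j * (-(x s j)) := by
                simp [Matrix.mulVec, dotProduct, ← Finset.sum_neg_distrib, mul_neg]
            _ ≤ ∑ j, K * g j s := Finset.sum_le_sum fun j _ => hterm j
            _ = K * f s := by rw [← Finset.mul_sum]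
        -- slope of the component tends to the derivative
        have hsl : Tendsto (fun z => (z - s)⁻¹ * (x s i - x z i)) (nhdsWithin s (Set.Ioi s))
            (nhds (-(Matrix.mulVec (A (σ s)) (x s) i))) := by
          have h1 : Tendsto (slope (fun u => x u i) s) (nhdsWithin s {s}ᶜ)
              (nhds (Matrix.mulVec (A (σ s)) (x s) i)) :=
            hasDerivAt_iff_tendsto_slope.mp (hxd s i)
          have h2 : Tendsto (slope (fun u => x u i) s) (nhdsWithin s (Set.Ioi s))
              (nhds (Matrix.mulVec (A (σ s)) (x s) i)) :=
            h1.mono_left (nhdsWithin_mono s fun z hz => ne_of_gt hz)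
          have := h2.neg
          refine this.congr fun z => ?_
          simp [slope_def_field, div_eq_inv_mul, neg_sub, mul_comm]
          ring
        have hDB : -(Matrix.mulVec (A (σ s)) (x s) i) < B := lt_of_le_of_lt hD (by
          simp only [B]; linarith)
        filter_upwards [hsl.eventually (eventually_lt_nhds hDB), self_mem_nhdsWithin]
          with z h1 h2
        have hzs : 0 < z - s := sub_pos.2 h2
        have hkey : g i z - g i s ≤ max (x s i - x z i) 0 := by
          rw [hgis]
          rcases le_total 0 (-(x z i)) with h | h
          · have : g i z = -(x z i) := max_eq_left h
            rw [this]
            have := le_max_left (x s i - x z i) (0 : ℝ)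
            linarith
          · have : g i z = 0 := max_eq_right h
            rw [this]
            have := le_max_right (x s i - x z i) (0 : ℝ)
            linarith
        calc (z - s)⁻¹ * (g i z - g i s) ≤ (z - s)⁻¹ * max (x s i - x z i) 0 :=
              mul_le_mul_of_nonneg_left hkey (inv_nonneg.2 hzs.le)
          _ = max ((z - s)⁻¹ * (x s i - x z i)) 0 := by
              rw [mul_max_of_nonneg _ _ (inv_nonneg.2 hzs.le), mul_zero]
          _ < B := max_lt h1 hB0
    have hall : ∀ᶠ z in nhdsWithin s (Set.Ioi s),
        ∀ i, (z - s)⁻¹ * (g i z - g i s) < B := eventually_all.2 Ei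
    filter_upwards [hall] with z hz
    have hsum : (z - s)⁻¹ * (f z - f s) = ∑ i, (z - s)⁻¹ * (g i z - g i s) := by
      simp only [f, ← Finset.sum_sub_distrib, Finset.mul_sum]
    rw [hsum]
    have hnε : (n : ℝ) * ε < (n + 1) * ε := by nlinarith
    have hεeq : ((n : ℝ) + 1) * ε = r - C * f s := by
      rw [hεdef]; field_simp
    calc ∑ i, (z - s)⁻¹ * (g i z - g i s) ≤ ∑ _i : Fin n, B :=
          Finset.sum_le_sum fun i _ => (hz i).le
      _ = n * B := by simp [Finset.sum_const, mul_comm]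
      _ = C * f s + n * ε := by simp only [B, C]; ring
      _ < r := by linarith
  -- Grönwall: f vanishes on [0, ∞)
  have hfle : ∀ s : ℝ, 0 ≤ s → f s = 0 := by
    intro s hs
    have := le_gronwallBound_of_liminf_deriv_right_le (f := f) (f' := fun u => C * f u)
      (δ := 0) (K := C) (ε := 0) (a := 0) (b := s)
      (hfc.continuousOn)
      (fun u _ r hr => (main u r hr).frequently)
      (le_of_eq hfzero)
      (fun u _ => by simp)
      s ⟨hs, le_refl s⟩
    rw [gronwallBound_ε0_δ0] at this
    exact le_antisymm this (hf0 s)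
  intro t ht hxt
  have hxn : ∀ i, 0 ≤ x t i := by
    intro i
    have h1 : g i t = 0 := by
      have := (Finset.sum_eq_zero_iff_of_nonneg fun i _ => hg0 i t).1 (hfle t ht) i
        (Finset.mem_univ i)
      exact this
    have h2 : -(x t i) ≤ 0 := by
      have := le_max_left (-(x t i)) (0 : ℝ)
      rw [show max (-(x t i)) 0 = g i t from rfl, h1] at this
      exact this
    linarith
  -- compute the derivative of V
  have hV : HasDerivAt (fun s => ∑ i, l i * x s i)
      (∑ i, l i * Matrix.mulVec (A (σ t)) (x t) i) t :=
    HasDerivAt.fun_sum fun i _ => (hxd t i).const_mul (l i)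
  rw [hV.deriv]
  have hrw : ∑ i, l i * Matrix.mulVec (A (σ t)) (x t) i
      = ∑ j, Matrix.vecMul l (A (σ t)) j * x t j := by
    simp only [Matrix.mulVec, Matrix.vecMul, dotProduct, Finset.mul_sum,
      Finset.sum_mul]
    rw [Finset.sum_comm]
    congr 1
    ext j
    congr 1
    ext i
    ring
  rw [hrw]
  obtain ⟨j₀, hj₀⟩ : ∃ j, x t j ≠ 0 := by
    by_contra h
    push_neg at h
    exact hxt (funext h)
  have hj₀pos : 0 < x t j₀ := lt_of_le_of_ne (hxn j₀) (Ne.symm hj₀)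
  have : ∑ j, Matrix.vecMul l (A (σ t)) j * x t j < ∑ _j : Fin n, (0 : ℝ) := by
    apply Finset.sum_lt_sum
    · intro j _
      exact mul_nonpos_of_nonpos_of_nonneg (hlyap _ j).le (hxn j)
    · exact ⟨j₀, Finset.mem_univ j₀, mul_neg_of_neg_of_pos (hlyap _ j₀) hj₀pos⟩
  simpa using this
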